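/- Let k ≥ 2, σ ∈ {+,−}^k and n ≥ 1. If π ∈ A_n(Σ_σ), then π satisfies condition (†). -/

import Mathlib

/-- Infinite words over the alphabet `{0,…,k-1}`; `s i` is the letter `s_{i+1}`. -/
abbrev Word (k : ℕ) := ℕ → Fin k

/-- The number of indices `i < j` (0-indexed) with `σ_{s_i} = −` (`false` encodes `−`). -/
def negCount {k : ℕ} (σ : Fin k → Bool) (s : Word k) (j : ℕ) : ℕ :=
  ((Finset.range j).filter (fun i => σ (s i) = false)).card

/-- The strict order `s ≺_σ t` on infinite words. -/
def sLt {k : ℕ} (σ : Fin k → Bool) (s t : Word k) : Prop :=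
  ∃ j : ℕ, (∀ i < j, s i = t i) ∧ s j ≠ t j ∧
    ((Even (negCount σ s j) ∧ s j < t j) ∨ (¬ Even (negCount σ s j) ∧ t j < s j))

/-- `shiftW s i` is the word `s_{[i+1,∞)}`, i.e. the `i`-th iterate of the shift. -/
def shiftW {k : ℕ} (s : Word k) (i : ℕ) : Word k := fun m => s (m + i)

/-- `Pat(s, Σ_σ, n) = π`: the first `n` shifts of `s` are ordered according to `π`
(0-indexed one-line notation). -/
def PatIs {k n : ℕ} (σ : Fin k → Bool) (s : Word k) (π : Equiv.Perm (Fin n)) : Prop :=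
  ∀ i j : Fin n, π i < π j ↔ sLt σ (shiftW s i) (shiftW s j)

/-- The allowed patterns of length `n` of the signed shift `Σ_σ`. -/
def Allowed {k : ℕ} (σ : Fin k → Bool) (n : ℕ) : Set (Equiv.Perm (Fin n)) :=
  {π | ∃ s : Word k, PatIs σ s π}

/-- The starred cycle `ĥπ*` of `π`, as a partial map on 0-indexed positions:
position `π_i` carries value `π_{i+1}`, and position `π_n` carries `*` (i.e. `none`). -/
def hatStar {n : ℕ} (π : Equiv.Perm (Fin n)) (p : Fin n) : Option (Fin n) :=
  if h : (π.symm p : ℕ) = n - 1 then none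
  else some (π ⟨(π.symm p : ℕ) + 1, by have := (π.symm p).isLt; omega⟩)

/-- `e : ℕ → ℕ` (used on `{0,…,k}`) is a `*`-`σ`-segmentation of `ĥπ*`. -/
def IsStarSeg {k n : ℕ} (σ : Fin k → Bool) (π : Equiv.Perm (Fin n)) (e : ℕ → ℕ) : Prop :=
  e 0 = 0 ∧ e k = n ∧ Monotone e ∧
  -- (a) the non-`*` entries in the `t`-th block are increasing (σ_t = +) or decreasing (σ_t = −)
  (∀ t : Fin k, ∀ p q : Fin n, e t ≤ (p : ℕ) → (q : ℕ) < e ((t : ℕ) + 1) → (p : ℕ) < (q : ℕ) →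
    ∀ v w : Fin n, hatStar π p = some v → hatStar π q = some w →
      (if σ t = true then v < w else w < v)) ∧
  -- (b)
  (∀ (hk : 0 < k) (h0 : 0 < n) (h1 : 1 < n), σ ⟨0, hk⟩ = true →
     hatStar π ⟨0, h0⟩ = none → hatStar π ⟨1, h1⟩ = some ⟨0, h0⟩ → e 1 ≤ 1) ∧
  -- (c)
  (∀ (hk : k - 1 < k) (h0 : n - 2 < n) (h1 : n - 1 < n), σ ⟨k - 1, hk⟩ = true →
     hatStar π ⟨n - 2, h0⟩ = some ⟨n - 1, h1⟩ → hatStar π ⟨n - 1, h1⟩ = none →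
     n - 1 ≤ e (k - 1)) ∧
  -- (d)
  (∀ (hk0 : 0 < k) (hk1 : k - 1 < k) (h0 : 0 < n) (h1 : n - 2 < n) (h2 : n - 1 < n),
     σ ⟨0, hk0⟩ = false → σ ⟨k - 1, hk1⟩ = false →
     hatStar π ⟨0, h0⟩ = some ⟨n - 1, h2⟩ →
     hatStar π ⟨n - 2, h1⟩ = some ⟨0, h0⟩ → hatStar π ⟨n - 1, h2⟩ = none →
     e 1 = 0 ∨ n - 1 ≤ e (k - 1)) ∧
  -- (e)
  (∀ (hk0 : 0 < k) (hk1 : k - 1 < k) (h0 : 0 < n) (h1 : 1 < n) (h2 : n - 1 < n),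
     σ ⟨0, hk0⟩ = false → σ ⟨k - 1, hk1⟩ = false →
     hatStar π ⟨n - 1, h2⟩ = some ⟨0, h0⟩ →
     hatStar π ⟨0, h0⟩ = none → hatStar π ⟨1, h1⟩ = some ⟨n - 1, h2⟩ →
     e (k - 1) = n ∨ e 1 ≤ 1)

/-- `ĥπ* ∈ C^{σ,*}`: some `*`-`σ`-segmentation exists. -/
def InCstar {k n : ℕ} (σ : Fin k → Bool) (π : Equiv.Perm (Fin n)) : Prop :=
  ∃ e : ℕ → ℕ, IsStarSeg σ π e

/-- The bad configuration forbidden by condition `(†)`: an integer `b ≥ 1` with `n − 2b ≥ 1`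
such that `π_n` lies strictly between `π_{n−2b}` and `π_{n−b}`, and for all `1 ≤ i ≤ b` and
`0 ≤ t ≤ k−1`, `e_t < π_{n−b−i} ≤ e_{t+1}` iff `e_t < π_{n−i} ≤ e_{t+1}`.
(Values of `π` are 0-indexed, so `e_t < v ≤ e_{t+1}` becomes `e t ≤ v ∧ v < e (t+1)`.) -/
def DaggerBad (k : ℕ) {n : ℕ} (π : Equiv.Perm (Fin n)) (e : ℕ → ℕ) (b : ℕ) : Prop :=
  ∃ (_ : 1 ≤ b) (hbn : 2 * b < n),
    (((π ⟨n - 1 - 2 * b, by omega⟩ : ℕ) < (π ⟨n - 1, by omega⟩ : ℕ) ∧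
      (π ⟨n - 1, by omega⟩ : ℕ) < (π ⟨n - 1 - b, by omega⟩ : ℕ)) ∨
     ((π ⟨n - 1 - b, by omega⟩ : ℕ) < (π ⟨n - 1, by omega⟩ : ℕ) ∧
      (π ⟨n - 1, by omega⟩ : ℕ) < (π ⟨n - 1 - 2 * b, by omega⟩ : ℕ))) ∧
    (∀ i, 1 ≤ i → i ≤ b → ∀ t, t < k →
      ((e t ≤ (π ⟨n - 1 - b - i, by omega⟩ : ℕ) ∧ (π ⟨n - 1 - b - i, by omega⟩ : ℕ) < e (t + 1)) ↔
       (e t ≤ (π ⟨n - 1 - i, by omega⟩ : ℕ) ∧ (π ⟨n - 1 - i, by omega⟩ : ℕ) < e (t + 1))))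

/-- Condition `(†)`. -/
def Dagger {k n : ℕ} (σ : Fin k → Bool) (π : Equiv.Perm (Fin n)) : Prop :=
  ∃ e : ℕ → ℕ, IsStarSeg σ π e ∧ ∀ b : ℕ, ¬ DaggerBad k π e b

/-- The letter of the `π`-monotone word assigned to the (0-indexed) value `v`:
the unique `t` with `e t ≤ v < e (t+1)` when `e` is a segmentation. -/
noncomputable def segLetter {k : ℕ} (hk : 0 < k) (e : ℕ → ℕ) (v : ℕ) : Fin k :=
  ⟨min (k - 1) (sInf {t : ℕ | v < e (t + 1)}),
   by have := Nat.min_le_left (k - 1) (sInf {t : ℕ | v < e (t + 1)}); omega⟩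

/-- The `π`-monotone word `s_1 ⋯ s_n` associated to a segmentation `e`. -/
noncomputable def monoWord {k n : ℕ} (hk : 0 < k) (e : ℕ → ℕ) (π : Equiv.Perm (Fin n)) : List (Fin k) :=
  (List.finRange n).map (fun i => segLetter hk e (π i))

/-- Prepend a finite word to an infinite word. -/
def appendW {k : ℕ} (l : List (Fin k)) (s : Word k) : Word k :=
  fun i => if h : i < l.length then l.get ⟨i, h⟩ else s (i - l.length)

/-- `n(q)`: number of negative letters of a finite word `q`. -/
def negCountL {k : ℕ} (σ : Fin k → Bool) (q : List (Fin k)) : ℕ :=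
  (q.filter (fun c => σ c = false)).length

/-- The least word `w_σ` of `(W_k, ≺_σ)`. -/
def wMin {k : ℕ} (hk : 0 < k) (σ : Fin k → Bool) : Word k :=
  if σ ⟨0, hk⟩ = true then fun _ => ⟨0, hk⟩
  else if σ ⟨k - 1, by omega⟩ = true then
    fun i => if i = 0 then ⟨0, hk⟩ else ⟨k - 1, by omega⟩
  else fun i => if i % 2 = 0 then ⟨0, hk⟩ else ⟨k - 1, by omega⟩

/-- The greatest word `W_σ` of `(W_k, ≺_σ)`. -/
def wMax {k : ℕ} (hk : 0 < k) (σ : Fin k → Bool) : Word k :=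
  if σ ⟨k - 1, by omega⟩ = true then fun _ => ⟨k - 1, by omega⟩
  else if σ ⟨0, hk⟩ = true then
    fun i => if i = 0 then ⟨k - 1, by omega⟩ else ⟨0, hk⟩
  else fun i => if i % 2 = 0 then ⟨k - 1, by omega⟩ else ⟨0, hk⟩

/-- A finite word is primitive if it is not a proper power of a shorter word. -/
def PrimitiveW {k : ℕ} (q : List (Fin k)) : Prop :=
  ¬ ∃ (r : List (Fin k)) (m : ℕ), r.length < q.length ∧ 1 < m ∧
      q = (List.replicate m r).flatten

/-- The word `s^{(1)}` (with `useMin = true`) resp. `s^{(2)}` (with `useMin = false`)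
built from the `π`-monotone word of a segmentation `e` and a 0-indexed position `x0`:
`u p^{n−1}` followed by `w_σ`/`W_σ` according to the parities of `n` and `n(p)`. -/
noncomputable def buildWord {k n : ℕ} (hk : 0 < k) (σ : Fin k → Bool) (e : ℕ → ℕ)
    (π : Equiv.Perm (Fin n)) (x0 : ℕ) (useMin : Bool) : Word k :=
  let w := monoWord hk e π
  let p := (w.take (n - 1)).drop x0
  let tail :=
    if n % 2 = 0 ∨ negCountL σ p % 2 = 0 then
      (if useMin then wMin hk σ else wMax hk σ)
    else
      (if useMin then wMax hk σ else wMin hk σ)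
  appendW (w.take x0 ++ (List.replicate (n - 1) p).flatten) tail

/-- `ψ_k(t)`: the number of primitive words of length `t` over a `k`-letter alphabet. -/
noncomputable def psiW (k t : ℕ) : ℕ :=
  Set.ncard {q : List (Fin k) | q.length = t ∧ PrimitiveW q}

/-- `a(n,k) = Σ_{t=1}^{n−1} ψ_k(t)·k^{n−t−1}`. -/
noncomputable def aNum (n k : ℕ) : ℕ :=
  ∑ t ∈ Finset.Icc 1 (n - 1), psiW k t * k ^ (n - t - 1)

/-- `I_{n,k} = a(n,k) + (k−2)k^{n−2}`, the number of allowed intervals of the `k`-shift. -/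
noncomputable def INum (n k : ℕ) : ℕ := aNum n k + (k - 2) * k ^ (n - 2)

/-- The all-`+` signature, giving the `k`-shift. -/
def allPlus (k : ℕ) : Fin k → Bool := fun _ => true

/-- `b(n,2) = |A_n(Σ_2)|` and `b(n,i) = |A_n(Σ_i) \ A_n(Σ_{i−1})|` for `i ≥ 3`. -/
noncomputable def bNum (n i : ℕ) : ℕ :=
  if i ≤ 2 then (Allowed (allPlus 2) n).ncard
  else ((Allowed (allPlus i) n) \ (Allowed (allPlus (i - 1)) n)).ncard

namespace DaggerAux

variable {k : ℕ}

/-- Prepend a single letter to an infinite word. -/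
def consW (c : Fin k) (u : Word k) : Word k := fun i => if i = 0 then c else u (i - 1)

@[simp] lemma consW_zero (c : Fin k) (u : Word k) : consW c u 0 = c := rfl

@[simp] lemma consW_succ (c : Fin k) (u : Word k) (i : ℕ) : consW c u (i + 1) = u i := rfl

lemma negCount_congr (σ : Fin k → Bool) {a b : Word k} (j : ℕ)
    (h : ∀ i < j, a i = b i) : negCount σ a j = negCount σ b j := by
  unfold negCount
  congr 1
  apply Finset.filter_congr
  intro i hi
  simp only [Finset.mem_range] at hi
  rw [h i hi]

@[simp] lemma negCount_zero (σ : Fin k → Bool) (a : Word k) : negCount σ a 0 = 0 := by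
  simp [negCount]

lemma negCount_succ (σ : Fin k → Bool) (a : Word k) (j : ℕ) :
    negCount σ a (j + 1) = negCount σ a j + (if σ (a j) = false then 1 else 0) := by
  unfold negCount
  rw [Finset.range_add_one, Finset.filter_insert]
  split_ifs with h
  · rw [Finset.card_insert_of_notMem (by simp)]
  · simp

lemma negCount_cons (σ : Fin k → Bool) (c : Fin k) (u : Word k) (j : ℕ) :
    negCount σ (consW c u) (j + 1) = (if σ c = false then 1 else 0) + negCount σ u j := by
  induction j with
  | zero => simp [negCount_succ, Nat.add_comm]; rfl
  | succ j ih =>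
      rw [negCount_succ, ih, consW_succ, negCount_succ]
      ring

lemma sLt_irrefl (σ : Fin k → Bool) (u : Word k) : ¬ sLt σ u u := by
  rintro ⟨j, -, hj, -⟩; exact hj rfl

lemma sLt_iff_of_min {σ : Fin k → Bool} {u v : Word k} {d : ℕ}
    (hmin : ∀ i < d, u i = v i) (hd : u d ≠ v d) :
    sLt σ u v ↔
      ((Even (negCount σ u d) ∧ u d < v d) ∨ (¬ Even (negCount σ u d) ∧ v d < u d)) := by
  constructor
  · rintro ⟨j, he, hne, hc⟩
    have hjd : j = d := by
      rcases Nat.lt_trichotomy j d with h | h | h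
      · exact absurd (hmin j h) hne
      · exact h
      · exact absurd (he d h) hd
    subst hjd; exact hc
  · intro hc; exact ⟨d, hmin, hd, hc⟩

lemma sLt_asymm {σ : Fin k → Bool} {u v : Word k} (h1 : sLt σ u v) (h2 : sLt σ v u) :
    False := by
  have hne : u ≠ v := by rintro rfl; exact sLt_irrefl σ u h1
  have hex : ∃ i, u i ≠ v i := Function.ne_iff.mp hne
  classical
  have hd : u (Nat.find hex) ≠ v (Nat.find hex) := Nat.find_spec hex
  have hmin : ∀ i < Nat.find hex, u i = v i := fun i hi => not_not.mp (Nat.find_min hex hi)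
  rw [sLt_iff_of_min hmin hd] at h1
  rw [sLt_iff_of_min (fun i hi => (hmin i hi).symm) (Ne.symm hd),
    negCount_congr σ (Nat.find hex) (fun i hi => (hmin i hi).symm)] at h2
  have hasym : ¬ (u (Nat.find hex) < v (Nat.find hex) ∧ v (Nat.find hex) < u (Nat.find hex)) :=
    fun ⟨a, b⟩ => absurd b (lt_asymm a)
  tauto

lemma sLt_total {σ : Fin k → Bool} {u v : Word k} (h : u ≠ v) :
    sLt σ u v ∨ sLt σ v u := by
  have hex : ∃ i, u i ≠ v i := Function.ne_iff.mp h
  classical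
  have hd : u (Nat.find hex) ≠ v (Nat.find hex) := Nat.find_spec hex
  have hmin : ∀ i < Nat.find hex, u i = v i := fun i hi => not_not.mp (Nat.find_min hex hi)
  rw [sLt_iff_of_min hmin hd,
    sLt_iff_of_min (fun i hi => (hmin i hi).symm) (Ne.symm hd),
    negCount_congr σ (Nat.find hex) (fun i hi => (hmin i hi).symm)]
  rcases lt_trichotomy (u (Nat.find hex)) (v (Nat.find hex)) with h1 | h1 | h1 <;>
    rcases em (Even (negCount σ u (Nat.find hex))) with he | he <;> tauto

lemma sLt_of_head_lt {σ : Fin k → Bool} {u v : Word k} (h : u 0 < v 0) : sLt σ u v :=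
  ⟨0, fun i hi => absurd hi (Nat.not_lt_zero i), ne_of_lt h,
    Or.inl ⟨by simp, h⟩⟩

lemma sLt_cons_cons {σ : Fin k → Bool} (c : Fin k) (a b : Word k) :
    sLt σ (consW c a) (consW c b) ↔ (if σ c = true then sLt σ a b else sLt σ b a) := by
  classical
  by_cases hab : a = b
  · subst hab
    constructor
    · intro h; exact absurd h (sLt_irrefl _ _)
    · intro h; split_ifs at h <;> exact absurd h (sLt_irrefl _ _)
  · have hex : ∃ i, a i ≠ b i := Function.ne_iff.mp hab
    set d := Nat.find hex with hdd
    have hd : a d ≠ b d := Nat.find_spec hex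
    have hmin : ∀ i < d, a i = b i := fun i hi => not_not.mp (Nat.find_min hex hi)
    have hminc : ∀ i < d + 1, consW c a i = consW c b i := by
      intro i hi
      cases i with
      | zero => rfl
      | succ i => simp only [consW_succ]; exact hmin i (by omega)
    have hdc : consW c a (d + 1) ≠ consW c b (d + 1) := by simpa using hd
    rw [sLt_iff_of_min hminc hdc, negCount_cons]
    simp only [consW_succ]
    cases hσc : σ c with
    | true =>
        simp only [hσc, if_pos rfl]
        rw [sLt_iff_of_min hmin hd]
        simp
    | false =>
        rw [sLt_iff_of_min (fun i hi => (hmin i hi).symm) (Ne.symm hd),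
          negCount_congr σ d (fun i hi => (hmin i hi).symm)]
        simp only [hσc, Bool.false_eq_true, if_false, ite_true, ite_false]
        rw [Nat.add_comm 1 _, Nat.even_add_one]
        have hasym : ¬ (a d < b d ∧ b d < a d) := fun ⟨x, y⟩ => absurd y (lt_asymm x)
        tauto

@[simp] lemma shiftW_apply (s : Word k) (i m : ℕ) : shiftW s i m = s (m + i) := rfl

lemma shiftW_zero (s : Word k) : shiftW s 0 = s := rfl

lemma cons_head_shift (u : Word k) : u = consW (u 0) (shiftW u 1) := by
  funext i; cases i <;> rfl

lemma shiftW_cons (s : Word k) (m : ℕ) : shiftW s m = consW (s m) (shiftW s (m + 1)) := by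
  funext i
  cases i with
  | zero => show s (0 + m) = s m; rw [Nat.zero_add]
  | succ i => show s (i + 1 + m) = s (i + (m + 1)); congr 1; omega

lemma descending_zero {σ : Fin k → Bool} (hk0 : 0 < k) (hσ : σ ⟨0, hk0⟩ = true)
    (u : Word k) (h0 : u 0 = ⟨0, hk0⟩) (h : sLt σ (shiftW u 1) u) : False := by
  have key : ∀ m, u m = ⟨0, hk0⟩ ∧ sLt σ (shiftW u (m + 1)) (shiftW u m) := by
    intro m
    induction m with
    | zero => exact ⟨h0, by rwa [shiftW_zero]⟩
    | succ m ih =>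
        obtain ⟨hm, hlt⟩ := ih
        have h1 : u (m + 1) = ⟨0, hk0⟩ := by
          by_contra hne
          have hv : (u (m + 1) : ℕ) ≠ 0 := fun h' => hne (Fin.ext h')
          have hlt' : shiftW u m 0 < shiftW u (m + 1) 0 := by
            show u (0 + m) < u (0 + (m + 1))
            rw [Nat.zero_add, Nat.zero_add, hm]
            exact Fin.lt_def.mpr (by simpa using Nat.pos_of_ne_zero hv)
          exact sLt_asymm hlt (sLt_of_head_lt hlt')
        refine ⟨h1, ?_⟩
        have e1 : shiftW u m = consW (⟨0, hk0⟩ : Fin k) (shiftW u (m + 1)) := by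
          rw [shiftW_cons u m, hm]
        have e2 : shiftW u (m + 1) = consW (⟨0, hk0⟩ : Fin k) (shiftW u (m + 2)) := by
          rw [shiftW_cons u (m + 1), h1]
        rw [e2, e1, sLt_cons_cons, if_pos hσ] at hlt
        exact hlt
  have hconst : shiftW u 1 = u := by
    funext i
    show u (i + 1) = u i
    rw [(key (i + 1)).1, (key i).1]
  have h2 := (key 0).2
  rw [shiftW_zero, hconst] at h2
  exact sLt_irrefl σ u h2

lemma ascending_top {σ : Fin k → Bool} (hk1 : k - 1 < k) (hσ : σ ⟨k - 1, hk1⟩ = true)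
    (u : Word k) (h0 : u 0 = ⟨k - 1, hk1⟩) (h : sLt σ u (shiftW u 1)) : False := by
  have key : ∀ m, u m = ⟨k - 1, hk1⟩ ∧ sLt σ (shiftW u m) (shiftW u (m + 1)) := by
    intro m
    induction m with
    | zero => exact ⟨h0, by rwa [shiftW_zero]⟩
    | succ m ih =>
        obtain ⟨hm, hlt⟩ := ih
        have h1 : u (m + 1) = ⟨k - 1, hk1⟩ := by
          by_contra hne
          have hv : (u (m + 1) : ℕ) ≠ k - 1 := fun h' => hne (Fin.ext h')
          have hlt' : shiftW u (m + 1) 0 < shiftW u m 0 := by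
            show u (0 + (m + 1)) < u (0 + m)
            rw [Nat.zero_add, Nat.zero_add, hm]
            exact Fin.lt_def.mpr (by have := (u (m + 1)).isLt; simp; omega)
          exact sLt_asymm hlt (sLt_of_head_lt hlt')
        refine ⟨h1, ?_⟩
        have e1 : shiftW u m = consW (⟨k - 1, hk1⟩ : Fin k) (shiftW u (m + 1)) := by
          rw [shiftW_cons u m, hm]
        have e2 : shiftW u (m + 1) = consW (⟨k - 1, hk1⟩ : Fin k) (shiftW u (m + 2)) := by
          rw [shiftW_cons u (m + 1), h1]
        rw [e2, e1, sLt_cons_cons, if_pos hσ] at hlt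
        exact hlt
  have hconst : shiftW u 1 = u := by
    funext i
    show u (i + 1) = u i
    rw [(key (i + 1)).1, (key i).1]
  have h2 := (key 0).2
  rw [shiftW_zero, hconst] at h2
  exact sLt_irrefl σ u h2

lemma alt_down {σ : Fin k → Bool} (hk0 : 0 < k) (hk1 : k - 1 < k)
    (hσ0 : σ ⟨0, hk0⟩ = false) (hσ1 : σ ⟨k - 1, hk1⟩ = false) (u : Word k)
    (h0 : u 0 = ⟨0, hk0⟩) (h1 : u 1 = ⟨k - 1, hk1⟩) (h : sLt σ (shiftW u 2) u) : False := by
  have key : ∀ m, u (2 * m) = ⟨0, hk0⟩ ∧ u (2 * m + 1) = ⟨k - 1, hk1⟩ ∧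
      sLt σ (shiftW u (2 * m + 2)) (shiftW u (2 * m)) := by
    intro m
    induction m with
    | zero =>
        refine ⟨h0, h1, ?_⟩
        show sLt σ (shiftW u 2) (shiftW u 0)
        rwa [shiftW_zero]
    | succ m ih =>
        obtain ⟨ha, hb, hlt⟩ := ih
        have hc : u (2 * m + 2) = ⟨0, hk0⟩ := by
          by_contra hne
          have hv : (u (2 * m + 2) : ℕ) ≠ 0 := fun h' => hne (Fin.ext h')
          have hlt' : shiftW u (2 * m) 0 < shiftW u (2 * m + 2) 0 := by
            show u (0 + 2 * m) < u (0 + (2 * m + 2))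
            rw [Nat.zero_add, Nat.zero_add, ha]
            exact Fin.lt_def.mpr (by simpa using Nat.pos_of_ne_zero hv)
          exact sLt_asymm hlt (sLt_of_head_lt hlt')
        have e0 : shiftW u (2 * m) = consW (⟨0, hk0⟩ : Fin k) (shiftW u (2 * m + 1)) := by
          rw [shiftW_cons u (2 * m), ha]
        have e2 : shiftW u (2 * m + 2) = consW (⟨0, hk0⟩ : Fin k) (shiftW u (2 * m + 3)) := by
          rw [shiftW_cons u (2 * m + 2), hc]
        rw [e2, e0, sLt_cons_cons, if_neg (by rw [hσ0]; simp)] at hlt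
        -- hlt : sLt σ (shiftW u (2*m+1)) (shiftW u (2*m+3))
        have hdm : u (2 * m + 3) = ⟨k - 1, hk1⟩ := by
          by_contra hne
          have hv : (u (2 * m + 3) : ℕ) ≠ k - 1 := fun h' => hne (Fin.ext h')
          have hlt' : shiftW u (2 * m + 3) 0 < shiftW u (2 * m + 1) 0 := by
            show u (0 + (2 * m + 3)) < u (0 + (2 * m + 1))
            rw [Nat.zero_add, Nat.zero_add, hb]
            exact Fin.lt_def.mpr (by have := (u (2 * m + 3)).isLt; simp; omega)
          exact sLt_asymm hlt (sLt_of_head_lt hlt')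
        have e1 : shiftW u (2 * m + 1) = consW (⟨k - 1, hk1⟩ : Fin k) (shiftW u (2 * m + 2)) := by
          rw [shiftW_cons u (2 * m + 1), hb]
        have e3 : shiftW u (2 * m + 3) = consW (⟨k - 1, hk1⟩ : Fin k) (shiftW u (2 * m + 4)) := by
          rw [shiftW_cons u (2 * m + 3), hdm]
        rw [e1, e3, sLt_cons_cons, if_neg (by rw [hσ1]; simp)] at hlt
        -- hlt : sLt σ (shiftW u (2*m+4)) (shiftW u (2*m+2))
        refine ⟨?_, ?_, ?_⟩
        · show u (2 * m + 2) = _; exact hc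
        · show u (2 * m + 3) = _; exact hdm
        · show sLt σ (shiftW u (2 * m + 4)) (shiftW u (2 * m + 2)); exact hlt
  have hval : ∀ i, u i = if i % 2 = 0 then (⟨0, hk0⟩ : Fin k) else ⟨k - 1, hk1⟩ := by
    intro i
    rcases Nat.even_or_odd i with ⟨q, hq⟩ | ⟨q, hq⟩
    · have hi : i = 2 * q := by omega
      rw [hi, (key q).1, if_pos (by omega)]
    · have hi : i = 2 * q + 1 := by omega
      rw [hi, (key q).2.1, if_neg (by omega)]
  have hconst : shiftW u 2 = u := by
    funext i
    show u (i + 2) = u i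
    rw [hval (i + 2), hval i]
    have : (i + 2) % 2 = i % 2 := by omega
    rw [this]
  have h2 : sLt σ (shiftW u 2) (shiftW u 0) := (key 0).2.2
  rw [shiftW_zero, hconst] at h2
  exact sLt_irrefl σ u h2

lemma alt_up {σ : Fin k → Bool} (hk0 : 0 < k) (hk1 : k - 1 < k)
    (hσ0 : σ ⟨0, hk0⟩ = false) (hσ1 : σ ⟨k - 1, hk1⟩ = false) (u : Word k)
    (h0 : u 0 = ⟨k - 1, hk1⟩) (h1 : u 1 = ⟨0, hk0⟩) (h : sLt σ u (shiftW u 2)) : False := by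
  have key : ∀ m, u (2 * m) = ⟨k - 1, hk1⟩ ∧ u (2 * m + 1) = ⟨0, hk0⟩ ∧
      sLt σ (shiftW u (2 * m)) (shiftW u (2 * m + 2)) := by
    intro m
    induction m with
    | zero =>
        refine ⟨h0, h1, ?_⟩
        show sLt σ (shiftW u 0) (shiftW u 2)
        rwa [shiftW_zero]
    | succ m ih =>
        obtain ⟨ha, hb, hlt⟩ := ih
        have hc : u (2 * m + 2) = ⟨k - 1, hk1⟩ := by
          by_contra hne
          have hv : (u (2 * m + 2) : ℕ) ≠ k - 1 := fun h' => hne (Fin.ext h')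
          have hlt' : shiftW u (2 * m + 2) 0 < shiftW u (2 * m) 0 := by
            show u (0 + (2 * m + 2)) < u (0 + 2 * m)
            rw [Nat.zero_add, Nat.zero_add, ha]
            exact Fin.lt_def.mpr (by have := (u (2 * m + 2)).isLt; simp; omega)
          exact sLt_asymm hlt (sLt_of_head_lt hlt')
        have e0 : shiftW u (2 * m) = consW (⟨k - 1, hk1⟩ : Fin k) (shiftW u (2 * m + 1)) := by
          rw [shiftW_cons u (2 * m), ha]
        have e2 : shiftW u (2 * m + 2) = consW (⟨k - 1, hk1⟩ : Fin k) (shiftW u (2 * m + 3)) := by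
          rw [shiftW_cons u (2 * m + 2), hc]
        rw [e0, e2, sLt_cons_cons, if_neg (by rw [hσ1]; simp)] at hlt
        -- hlt : sLt σ (shiftW u (2*m+3)) (shiftW u (2*m+1))
        have hdm : u (2 * m + 3) = ⟨0, hk0⟩ := by
          by_contra hne
          have hv : (u (2 * m + 3) : ℕ) ≠ 0 := fun h' => hne (Fin.ext h')
          have hlt' : shiftW u (2 * m + 1) 0 < shiftW u (2 * m + 3) 0 := by
            show u (0 + (2 * m + 1)) < u (0 + (2 * m + 3))
            rw [Nat.zero_add, Nat.zero_add, hb]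
            exact Fin.lt_def.mpr (by simpa using Nat.pos_of_ne_zero hv)
          exact sLt_asymm hlt (sLt_of_head_lt hlt')
        have e1 : shiftW u (2 * m + 1) = consW (⟨0, hk0⟩ : Fin k) (shiftW u (2 * m + 2)) := by
          rw [shiftW_cons u (2 * m + 1), hb]
        have e3 : shiftW u (2 * m + 3) = consW (⟨0, hk0⟩ : Fin k) (shiftW u (2 * m + 4)) := by
          rw [shiftW_cons u (2 * m + 3), hdm]
        rw [e3, e1, sLt_cons_cons, if_neg (by rw [hσ0]; simp)] at hlt
        -- hlt : sLt σ (shiftW u (2*m+2)) (shiftW u (2*m+4))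
        refine ⟨?_, ?_, ?_⟩
        · show u (2 * m + 2) = _; exact hc
        · show u (2 * m + 3) = _; exact hdm
        · show sLt σ (shiftW u (2 * m + 2)) (shiftW u (2 * m + 4)); exact hlt
  have hval : ∀ i, u i = if i % 2 = 0 then (⟨k - 1, hk1⟩ : Fin k) else ⟨0, hk0⟩ := by
    intro i
    rcases Nat.even_or_odd i with ⟨q, hq⟩ | ⟨q, hq⟩
    · have hi : i = 2 * q := by omega
      rw [hi, (key q).1, if_pos (by omega)]
    · have hi : i = 2 * q + 1 := by omega
      rw [hi, (key q).2.1, if_neg (by omega)]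
  have hconst : shiftW u 2 = u := by
    funext i
    show u (i + 2) = u i
    rw [hval (i + 2), hval i]
    have : (i + 2) % 2 = i % 2 := by omega
    rw [this]
  have h2 : sLt σ (shiftW u 0) (shiftW u 2) := (key 0).2.2
  rw [shiftW_zero, hconst] at h2
  exact sLt_irrefl σ u h2

lemma sandwich {σ : Fin k → Bool} {u v w : Word k} {b : ℕ} (hb : 1 ≤ b)
    (f1 : ∀ i < b, w i = v i) (f2 : ∀ i, w (i + b) = v i) (f3 : ∀ i, v (i + b) = u i)
    (huv : u ≠ v) :
    (sLt σ u v ↔ sLt σ u w) ∧ (sLt σ v u ↔ sLt σ w u) := by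
  classical
  have hex : ∃ i, u i ≠ v i := Function.ne_iff.mp huv
  have hd : u (Nat.find hex) ≠ v (Nat.find hex) := Nat.find_spec hex
  set d := Nat.find hex with hdd
  have hmin : ∀ i < d, u i = v i := fun i hi => not_not.mp (Nat.find_min hex hi)
  have hw : ∀ i ≤ d, w i = v i := by
    intro i hi
    rcases Nat.lt_or_ge i b with h | h
    · exact f1 i h
    · have h1 : w i = v (i - b) := by
        have := f2 (i - b); rwa [Nat.sub_add_cancel h] at this
      have h2 : v i = u (i - b) := by
        have := f3 (i - b); rwa [Nat.sub_add_cancel h] at this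
      have h3 : u (i - b) = v (i - b) := hmin _ (by omega)
      rw [h1, h2]; exact h3.symm
  constructor
  · rw [sLt_iff_of_min hmin hd,
      sLt_iff_of_min (u := u) (v := w)
        (fun i hi => (hmin i hi).trans (hw i hi.le).symm)
        (by rw [hw d le_rfl]; exact hd),
      hw d le_rfl]
  · rw [sLt_iff_of_min (fun i hi => (hmin i hi).symm) (Ne.symm hd),
      sLt_iff_of_min (u := w) (v := u)
        (fun i hi => (hw i hi.le).trans (hmin i hi).symm)
        (by rw [hw d le_rfl]; exact Ne.symm hd),
      hw d le_rfl,
      negCount_congr σ d (fun i hi => (hw i hi.le))]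

lemma hatStar_none_iff {n : ℕ} (π : Equiv.Perm (Fin n)) (p : Fin n) :
    hatStar π p = none ↔ (π.symm p : ℕ) = n - 1 := by
  unfold hatStar; split_ifs with h <;> simp [h]

lemma hatStar_some' {n : ℕ} {π : Equiv.Perm (Fin n)} {p v : Fin n}
    (h : hatStar π p = some v) :
    (π.symm p : ℕ) ≠ n - 1 ∧
      ∀ (hlt : (π.symm p : ℕ) + 1 < n), π ⟨(π.symm p : ℕ) + 1, hlt⟩ = v := by
  unfold hatStar at h
  split_ifs at h with hc
  exact ⟨hc, fun hlt => Option.some.inj h⟩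

lemma rank_lt {n : ℕ} (π : Equiv.Perm (Fin n)) (c : Fin n) :
    (Finset.univ.filter fun j => π j < c).card = (c : ℕ) := by
  have himg : (Finset.univ.filter fun j => π j < c) = (Finset.Iio c).image π.symm := by
    ext j
    simp only [Finset.mem_filter, Finset.mem_univ, true_and, Finset.mem_image, Finset.mem_Iio]
    constructor
    · intro h; exact ⟨π j, h, by simp⟩
    · rintro ⟨x, hx, rfl⟩; simpa using hx
  rw [himg, Finset.card_image_of_injective _ (Equiv.injective _), Fin.card_Iio]

lemma rank_le {n : ℕ} (π : Equiv.Perm (Fin n)) (c : Fin n) :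
    (Finset.univ.filter fun j => π j ≤ c).card = (c : ℕ) + 1 := by
  have himg : (Finset.univ.filter fun j => π j ≤ c) = (Finset.Iic c).image π.symm := by
    ext j
    simp only [Finset.mem_filter, Finset.mem_univ, true_and, Finset.mem_image, Finset.mem_Iic]
    constructor
    · intro h; exact ⟨π j, h, by simp⟩
    · rintro ⟨x, hx, rfl⟩; simpa using hx
  rw [himg, Finset.card_image_of_injective _ (Equiv.injective _), Fin.card_Iic]

def segE {k : ℕ} (n : ℕ) (s : Word k) (t : ℕ) : ℕ :=
  (Finset.univ.filter fun i : Fin n => ((s (i : ℕ) : ℕ) < t)).card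

lemma segE_zero {k : ℕ} (n : ℕ) (s : Word k) : segE n s 0 = 0 := by
  simp [segE]

lemma segE_top {k : ℕ} (n : ℕ) (s : Word k) : segE n s k = n := by
  unfold segE
  rw [Finset.filter_true_of_mem (fun (i : Fin n) _ => (s (i : ℕ)).isLt)]
  simp

lemma segE_mono {k : ℕ} (n : ℕ) (s : Word k) : Monotone (segE n s) := by
  intro a b hab
  unfold segE
  apply Finset.card_le_card
  intro i hi
  simp only [Finset.mem_filter, Finset.mem_univ, true_and] at hi ⊢
  omega

lemma head_lt_pat {n : ℕ} {σ : Fin k → Bool} {s : Word k} {π : Equiv.Perm (Fin n)}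
    (hs : PatIs σ s π) {i j : Fin n} (hij : (s (i : ℕ) : ℕ) < (s (j : ℕ) : ℕ)) :
    π i < π j := by
  refine (hs i j).mpr (sLt_of_head_lt ?_)
  show s (0 + (i : ℕ)) < s (0 + (j : ℕ))
  rw [Nat.zero_add, Nat.zero_add]
  exact Fin.lt_def.mpr hij

lemma segE_block1 {n : ℕ} {σ : Fin k → Bool} {s : Word k} {π : Equiv.Perm (Fin n)}
    (hs : PatIs σ s π) (i : Fin n) : segE n s ((s (i : ℕ) : ℕ)) ≤ (π i : ℕ) := by
  rw [← rank_lt π (π i)]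
  unfold segE
  apply Finset.card_le_card
  intro j hj
  simp only [Finset.mem_filter, Finset.mem_univ, true_and] at hj ⊢
  exact head_lt_pat hs hj

lemma segE_block2 {n : ℕ} {σ : Fin k → Bool} {s : Word k} {π : Equiv.Perm (Fin n)}
    (hs : PatIs σ s π) (i : Fin n) : (π i : ℕ) < segE n s ((s (i : ℕ) : ℕ) + 1) := by
  have hsub : (Finset.univ.filter fun j => π j ≤ π i) ⊆
      (Finset.univ.filter fun j : Fin n => ((s (j : ℕ) : ℕ) < (s (i : ℕ) : ℕ) + 1)) := by
    intro j hj
    simp only [Finset.mem_filter, Finset.mem_univ, true_and] at hj ⊢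
    by_contra hgt
    push_neg at hgt
    exact absurd hj (not_le.mpr (head_lt_pat hs (by omega)))
  have hcard := Finset.card_le_card hsub
  rw [rank_le π (π i)] at hcard
  exact hcard

lemma segE_blockinv {n : ℕ} {σ : Fin k → Bool} {s : Word k} {π : Equiv.Perm (Fin n)}
    (hs : PatIs σ s π) (i : Fin n) (t : ℕ) (h1 : segE n s t ≤ (π i : ℕ))
    (h2 : (π i : ℕ) < segE n s (t + 1)) : (s (i : ℕ) : ℕ) = t := by
  rcases Nat.lt_trichotomy (s (i : ℕ) : ℕ) t with h | h | h
  · have hm := segE_mono n s (show (s (i : ℕ) : ℕ) + 1 ≤ t from h)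
    have := segE_block2 hs i; omega
  · exact h
  · have hm := segE_mono n s (show t + 1 ≤ (s (i : ℕ) : ℕ) from h)
    have := segE_block1 hs i; omega

end DaggerAux

set_option maxHeartbeats 1600000 in
theorem allowed_satisfies_dagger (k n : ℕ) (hk : 2 ≤ k) (hn : 1 ≤ n)
    (σ : Fin k → Bool) (π : Equiv.Perm (Fin n)) (hπ : π ∈ Allowed σ n) :
    Dagger σ π := by
  classical
  open DaggerAux in
  obtain ⟨s, hs⟩ := hπ
  have hE0 : DaggerAux.segE n s 0 = 0 := DaggerAux.segE_zero n s
  have hEk : DaggerAux.segE n s k = n := DaggerAux.segE_top n s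
  have hEmono : Monotone (DaggerAux.segE n s) := DaggerAux.segE_mono n s
  have hhead : ∀ m : ℕ, shiftW s m 0 = s m := fun m => by
    show s (0 + m) = s m; rw [Nat.zero_add]
  have block1 : ∀ i : Fin n, DaggerAux.segE n s ((s (i : ℕ) : ℕ)) ≤ (π i : ℕ) :=
    DaggerAux.segE_block1 hs
  have block2 : ∀ i : Fin n, (π i : ℕ) < DaggerAux.segE n s ((s (i : ℕ) : ℕ) + 1) :=
    DaggerAux.segE_block2 hs
  have blockinv : ∀ (i : Fin n) (t : ℕ), DaggerAux.segE n s t ≤ (π i : ℕ) →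
      (π i : ℕ) < DaggerAux.segE n s (t + 1) → (s (i : ℕ) : ℕ) = t :=
    DaggerAux.segE_blockinv hs
  have hdistinct : ∀ i j : Fin n, i ≠ j → shiftW s (i : ℕ) ≠ shiftW s (j : ℕ) := by
    intro i j hne heq
    rcases Ne.lt_or_gt (fun hp : π i = π j => hne (π.injective hp)) with h | h
    · have h1 := (hs i j).mp h; rw [heq] at h1; exact DaggerAux.sLt_irrefl σ _ h1
    · have h1 := (hs j i).mp h; rw [heq] at h1; exact DaggerAux.sLt_irrefl σ _ h1
  refine ⟨DaggerAux.segE n s, ⟨hE0, hEk, hEmono, ?_, ?_, ?_, ?_, ?_⟩, ?_⟩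
  · -- condition (a)
    intro t p q hp hq hpq v w hv hw
    obtain ⟨hi1, hi2⟩ := DaggerAux.hatStar_some' hv
    obtain ⟨hj1, hj2⟩ := DaggerAux.hatStar_some' hw
    have hin : (π.symm p : ℕ) + 1 < n := by have := (π.symm p).isLt; omega
    have hjn : (π.symm q : ℕ) + 1 < n := by have := (π.symm q).isLt; omega
    have hpi : π (π.symm p) = p := π.apply_symm_apply p
    have hqj : π (π.symm q) = q := π.apply_symm_apply q
    have hsi : (s ((π.symm p : ℕ)) : ℕ) = (t : ℕ) :=
      blockinv (π.symm p) t (by rw [hpi]; exact hp) (by rw [hpi]; omega)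
    have hsj : (s ((π.symm q : ℕ)) : ℕ) = (t : ℕ) :=
      blockinv (π.symm q) t (by rw [hqj]; omega) (by rw [hqj]; exact hq)
    have hππ : π (π.symm p) < π (π.symm q) := by
      rw [hpi, hqj]; exact Fin.lt_def.mpr hpq
    have hss := (hs _ _).mp hππ
    rw [DaggerAux.shiftW_cons s ((π.symm p : ℕ)), DaggerAux.shiftW_cons s ((π.symm q : ℕ)),
      show s ((π.symm p : ℕ)) = t from Fin.ext hsi,
      show s ((π.symm q : ℕ)) = t from Fin.ext hsj, DaggerAux.sLt_cons_cons] at hss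
    have hv' := hi2 hin
    have hw' := hj2 hjn
    by_cases hσt : σ t = true
    · rw [if_pos hσt] at hss ⊢
      rw [← hv', ← hw']
      exact (hs ⟨(π.symm p : ℕ) + 1, hin⟩ ⟨(π.symm q : ℕ) + 1, hjn⟩).mpr hss
    · rw [if_neg hσt] at hss ⊢
      rw [← hv', ← hw']
      exact (hs ⟨(π.symm q : ℕ) + 1, hjn⟩ ⟨(π.symm p : ℕ) + 1, hin⟩).mpr hss
  · -- condition (b)
    intro hk0 h0 h1 hσ hstN hstS
    have hn1' : n - 1 < n := by omega
    have hn2' : n - 2 < n := by omega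
    have hA : (π.symm ⟨0, h0⟩ : ℕ) = n - 1 := (DaggerAux.hatStar_none_iff π _).mp hstN
    have hx1 : π.symm ⟨0, h0⟩ = (⟨n - 1, hn1'⟩ : Fin n) :=
      Fin.ext (by show (π.symm ⟨0, h0⟩ : ℕ) = n - 1; omega)
    have hπ1 : π ⟨n - 1, hn1'⟩ = ⟨0, h0⟩ := ((Equiv.symm_apply_eq π).mp hx1).symm
    obtain ⟨hB1, hB2⟩ := DaggerAux.hatStar_some' hstS
    have hin : (π.symm ⟨1, h1⟩ : ℕ) + 1 < n := by have := (π.symm ⟨1, h1⟩).isLt; omega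
    have hππ := hB2 hin
    have hieq : (π.symm ⟨1, h1⟩ : ℕ) + 1 = n - 1 :=
      congrArg Fin.val (π.injective (hππ.trans hπ1.symm))
    have hx2 : π.symm ⟨1, h1⟩ = (⟨n - 2, hn2'⟩ : Fin n) :=
      Fin.ext (by show (π.symm ⟨1, h1⟩ : ℕ) = n - 2; omega)
    have hπ2 : π ⟨n - 2, hn2'⟩ = ⟨1, h1⟩ := ((Equiv.symm_apply_eq π).mp hx2).symm
    by_contra hcon
    push_neg at hcon
    have hs1 : (s (n - 1) : ℕ) = 0 :=
      blockinv ⟨n - 1, hn1'⟩ 0 (by omega)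
        (by rw [hπ1]; show (0 : ℕ) < DaggerAux.segE n s 1; omega)
    have hs2 : (s (n - 2) : ℕ) = 0 :=
      blockinv ⟨n - 2, hn2'⟩ 0 (by omega)
        (by rw [hπ2]; show (1 : ℕ) < DaggerAux.segE n s 1; omega)
    have hzy : sLt σ (shiftW s (n - 1)) (shiftW s (n - 2)) :=
      (hs ⟨n - 1, hn1'⟩ ⟨n - 2, hn2'⟩).mp
        (by rw [hπ1, hπ2]; exact Fin.lt_def.mpr (show (0 : ℕ) < 1 by omega))
    rw [DaggerAux.shiftW_cons s (n - 2), show n - 2 + 1 = n - 1 by omega,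
      show s (n - 2) = s (n - 1) from Fin.ext (by omega)] at hzy
    have hz0 : shiftW s (n - 1) 0 = s (n - 1) := hhead (n - 1)
    have hzc : shiftW s (n - 1)
        = DaggerAux.consW (s (n - 1)) (shiftW (shiftW s (n - 1)) 1) := by
      conv_lhs => rw [DaggerAux.cons_head_shift (shiftW s (n - 1))]
      rw [hz0]
    have hz' : sLt σ (DaggerAux.consW (s (n - 1)) (shiftW (shiftW s (n - 1)) 1))
        (DaggerAux.consW (s (n - 1)) (shiftW s (n - 1))) := by
      rw [← hzc]; exact hzy
    rw [DaggerAux.sLt_cons_cons,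
      if_pos (by rw [show s (n - 1) = ⟨0, hk0⟩ from Fin.ext hs1]; exact hσ)] at hz'
    exact DaggerAux.descending_zero hk0 hσ (shiftW s (n - 1))
      (by rw [hz0]; exact Fin.ext hs1) hz'
  · -- condition (c)
    intro hk1 h0 h1 hσ hstA hstB
    have hn2 : 2 ≤ n := by
      by_contra hle
      have heq : (⟨n - 2, h0⟩ : Fin n) = ⟨n - 1, h1⟩ := Fin.ext (by omega)
      rw [heq, hstB] at hstA
      cases hstA
    have hA : (π.symm ⟨n - 1, h1⟩ : ℕ) = n - 1 := (DaggerAux.hatStar_none_iff π _).mp hstB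
    have hx1 : π.symm ⟨n - 1, h1⟩ = (⟨n - 1, h1⟩ : Fin n) :=
      Fin.ext (by show (π.symm ⟨n - 1, h1⟩ : ℕ) = n - 1; omega)
    have hπ1 : π ⟨n - 1, h1⟩ = ⟨n - 1, h1⟩ := ((Equiv.symm_apply_eq π).mp hx1).symm
    obtain ⟨hB1, hB2⟩ := DaggerAux.hatStar_some' hstA
    have hin : (π.symm ⟨n - 2, h0⟩ : ℕ) + 1 < n := by have := (π.symm ⟨n - 2, h0⟩).isLt; omega
    have hππ := hB2 hin
    have hieq : (π.symm ⟨n - 2, h0⟩ : ℕ) + 1 = n - 1 :=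
      congrArg Fin.val (π.injective (hππ.trans hπ1.symm))
    have hx2 : π.symm ⟨n - 2, h0⟩ = (⟨n - 2, h0⟩ : Fin n) :=
      Fin.ext (by show (π.symm ⟨n - 2, h0⟩ : ℕ) = n - 2; omega)
    have hπ2 : π ⟨n - 2, h0⟩ = ⟨n - 2, h0⟩ := ((Equiv.symm_apply_eq π).mp hx2).symm
    by_contra hcon
    push_neg at hcon
    have hsk : k - 1 + 1 = k := by omega
    have hs1 : (s (n - 1) : ℕ) = k - 1 :=
      blockinv ⟨n - 1, h1⟩ (k - 1)
        (by rw [hπ1]; show DaggerAux.segE n s (k - 1) ≤ n - 1; omega)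
        (by rw [hπ1, hsk, hEk]; show n - 1 < n; omega)
    have hs2 : (s (n - 2) : ℕ) = k - 1 :=
      blockinv ⟨n - 2, h0⟩ (k - 1)
        (by rw [hπ2]; show DaggerAux.segE n s (k - 1) ≤ n - 2; omega)
        (by rw [hπ2, hsk, hEk]; show n - 2 < n; omega)
    have hyz : sLt σ (shiftW s (n - 2)) (shiftW s (n - 1)) :=
      (hs ⟨n - 2, h0⟩ ⟨n - 1, h1⟩).mp
        (by rw [hπ2, hπ1]; exact Fin.lt_def.mpr (show n - 2 < n - 1 by omega))
    rw [DaggerAux.shiftW_cons s (n - 2), show n - 2 + 1 = n - 1 by omega,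
      show s (n - 2) = s (n - 1) from Fin.ext (by omega)] at hyz
    have hz0 : shiftW s (n - 1) 0 = s (n - 1) := hhead (n - 1)
    have hzc : shiftW s (n - 1)
        = DaggerAux.consW (s (n - 1)) (shiftW (shiftW s (n - 1)) 1) := by
      conv_lhs => rw [DaggerAux.cons_head_shift (shiftW s (n - 1))]
      rw [hz0]
    have hz' : sLt σ (DaggerAux.consW (s (n - 1)) (shiftW s (n - 1)))
        (DaggerAux.consW (s (n - 1)) (shiftW (shiftW s (n - 1)) 1)) := by
      rw [← hzc]; exact hyz
    rw [DaggerAux.sLt_cons_cons,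
      if_pos (by rw [show s (n - 1) = ⟨k - 1, hk1⟩ from Fin.ext hs1]; exact hσ)] at hz'
    exact DaggerAux.ascending_top hk1 hσ (shiftW s (n - 1))
      (by rw [hz0]; exact Fin.ext hs1) hz'
  · -- condition (d)
    intro hk0 hk1 h0 h1 h2 hσ0 hσ1 hstA hstB hstC
    have hA : (π.symm ⟨n - 1, h2⟩ : ℕ) = n - 1 := (DaggerAux.hatStar_none_iff π _).mp hstC
    have hx1 : π.symm ⟨n - 1, h2⟩ = (⟨n - 1, h2⟩ : Fin n) :=
      Fin.ext (by show (π.symm ⟨n - 1, h2⟩ : ℕ) = n - 1; omega)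
    have hπ1 : π ⟨n - 1, h2⟩ = ⟨n - 1, h2⟩ := ((Equiv.symm_apply_eq π).mp hx1).symm
    obtain ⟨hB1, hB2⟩ := DaggerAux.hatStar_some' hstA
    have hin : (π.symm ⟨0, h0⟩ : ℕ) + 1 < n := by have := (π.symm ⟨0, h0⟩).isLt; omega
    have hππ := hB2 hin
    have hieq : (π.symm ⟨0, h0⟩ : ℕ) + 1 = n - 1 :=
      congrArg Fin.val (π.injective (hππ.trans hπ1.symm))
    have hn2 : 2 ≤ n := by omega
    have hx2 : π.symm ⟨0, h0⟩ = (⟨n - 2, h1⟩ : Fin n) :=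
      Fin.ext (by show (π.symm ⟨0, h0⟩ : ℕ) = n - 2; omega)
    have hπ2 : π ⟨n - 2, h1⟩ = ⟨0, h0⟩ := ((Equiv.symm_apply_eq π).mp hx2).symm
    obtain ⟨hC1, hC2⟩ := DaggerAux.hatStar_some' hstB
    have hjn : (π.symm ⟨n - 2, h1⟩ : ℕ) + 1 < n := by have := (π.symm ⟨n - 2, h1⟩).isLt; omega
    have hππ2 := hC2 hjn
    have hjeq : (π.symm ⟨n - 2, h1⟩ : ℕ) + 1 = n - 2 :=
      congrArg Fin.val (π.injective (hππ2.trans hπ2.symm))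
    have hn3 : 3 ≤ n := by omega
    have hn3' : n - 3 < n := by omega
    have hx3 : π.symm ⟨n - 2, h1⟩ = (⟨n - 3, hn3'⟩ : Fin n) :=
      Fin.ext (by show (π.symm ⟨n - 2, h1⟩ : ℕ) = n - 3; omega)
    have hπ3 : π ⟨n - 3, hn3'⟩ = ⟨n - 2, h1⟩ := ((Equiv.symm_apply_eq π).mp hx3).symm
    by_contra hcon
    push_neg at hcon
    obtain ⟨hc1, hc2⟩ := hcon
    have hsk : k - 1 + 1 = k := by omega
    have hsA : (s (n - 2) : ℕ) = 0 :=
      blockinv ⟨n - 2, h1⟩ 0 (by omega)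
        (by rw [hπ2]; show (0 : ℕ) < DaggerAux.segE n s 1; omega)
    have hsB : (s (n - 1) : ℕ) = k - 1 :=
      blockinv ⟨n - 1, h2⟩ (k - 1)
        (by rw [hπ1]; show DaggerAux.segE n s (k - 1) ≤ n - 1; omega)
        (by rw [hπ1, hsk, hEk]; show n - 1 < n; omega)
    have hsC : (s (n - 3) : ℕ) = k - 1 :=
      blockinv ⟨n - 3, hn3'⟩ (k - 1)
        (by rw [hπ3]; show DaggerAux.segE n s (k - 1) ≤ n - 2; omega)
        (by rw [hπ3, hsk, hEk]; show n - 2 < n; omega)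
    have hxz : sLt σ (shiftW s (n - 3)) (shiftW s (n - 1)) :=
      (hs ⟨n - 3, hn3'⟩ ⟨n - 1, h2⟩).mp
        (by rw [hπ3, hπ1]; exact Fin.lt_def.mpr (show n - 2 < n - 1 by omega))
    rw [DaggerAux.shiftW_cons s (n - 3), DaggerAux.shiftW_cons s (n - 1),
      show n - 3 + 1 = n - 2 by omega, show n - 1 + 1 = n by omega,
      show s (n - 3) = s (n - 1) from Fin.ext (by omega), DaggerAux.sLt_cons_cons,
      if_neg (by rw [show s (n - 1) = ⟨k - 1, hk1⟩ from Fin.ext hsB, hσ1]; simp)] at hxz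
    have hy2 : shiftW (shiftW s (n - 2)) 2 = shiftW s n :=
      funext fun m => congrArg s (by omega)
    refine DaggerAux.alt_down hk0 hk1 hσ0 hσ1 (shiftW s (n - 2)) ?_ ?_ (by rw [hy2]; exact hxz)
    · show s (0 + (n - 2)) = _; rw [Nat.zero_add]; exact Fin.ext hsA
    · show s (1 + (n - 2)) = _; rw [show 1 + (n - 2) = n - 1 by omega]; exact Fin.ext hsB
  · -- condition (e)
    intro hk0 hk1 h0 h1 h2 hσ0 hσ1 hstA hstB hstC
    have hA : (π.symm ⟨0, h0⟩ : ℕ) = n - 1 := (DaggerAux.hatStar_none_iff π _).mp hstB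
    have hx1 : π.symm ⟨0, h0⟩ = (⟨n - 1, h2⟩ : Fin n) :=
      Fin.ext (by show (π.symm ⟨0, h0⟩ : ℕ) = n - 1; omega)
    have hπ1 : π ⟨n - 1, h2⟩ = ⟨0, h0⟩ := ((Equiv.symm_apply_eq π).mp hx1).symm
    obtain ⟨hB1, hB2⟩ := DaggerAux.hatStar_some' hstA
    have hin : (π.symm ⟨n - 1, h2⟩ : ℕ) + 1 < n := by have := (π.symm ⟨n - 1, h2⟩).isLt; omega
    have hππ := hB2 hin
    have hieq : (π.symm ⟨n - 1, h2⟩ : ℕ) + 1 = n - 1 :=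
      congrArg Fin.val (π.injective (hππ.trans hπ1.symm))
    have hn2 : 2 ≤ n := by omega
    have hn2' : n - 2 < n := by omega
    have hx2 : π.symm ⟨n - 1, h2⟩ = (⟨n - 2, hn2'⟩ : Fin n) :=
      Fin.ext (by show (π.symm ⟨n - 1, h2⟩ : ℕ) = n - 2; omega)
    have hπ2 : π ⟨n - 2, hn2'⟩ = ⟨n - 1, h2⟩ := ((Equiv.symm_apply_eq π).mp hx2).symm
    obtain ⟨hC1, hC2⟩ := DaggerAux.hatStar_some' hstC
    have hjn : (π.symm ⟨1, h1⟩ : ℕ) + 1 < n := by have := (π.symm ⟨1, h1⟩).isLt; omega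
    have hππ2 := hC2 hjn
    have hjeq : (π.symm ⟨1, h1⟩ : ℕ) + 1 = n - 2 :=
      congrArg Fin.val (π.injective (hππ2.trans hπ2.symm))
    have hn3 : 3 ≤ n := by omega
    have hn3' : n - 3 < n := by omega
    have hx3 : π.symm ⟨1, h1⟩ = (⟨n - 3, hn3'⟩ : Fin n) :=
      Fin.ext (by show (π.symm ⟨1, h1⟩ : ℕ) = n - 3; omega)
    have hπ3 : π ⟨n - 3, hn3'⟩ = ⟨1, h1⟩ := ((Equiv.symm_apply_eq π).mp hx3).symm
    by_contra hcon
    push_neg at hcon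
    obtain ⟨hc1, hc2⟩ := hcon
    have hEk1 : DaggerAux.segE n s (k - 1) ≤ n :=
      le_of_le_of_eq (hEmono (show k - 1 ≤ k by omega)) hEk
    have hsk : k - 1 + 1 = k := by omega
    have hsA : (s (n - 1) : ℕ) = 0 :=
      blockinv ⟨n - 1, h2⟩ 0 (by omega)
        (by rw [hπ1]; show (0 : ℕ) < DaggerAux.segE n s 1; omega)
    have hsB : (s (n - 3) : ℕ) = 0 :=
      blockinv ⟨n - 3, hn3'⟩ 0 (by omega)
        (by rw [hπ3]; show (1 : ℕ) < DaggerAux.segE n s 1; omega)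
    have hsC : (s (n - 2) : ℕ) = k - 1 :=
      blockinv ⟨n - 2, hn2'⟩ (k - 1)
        (by rw [hπ2]; show DaggerAux.segE n s (k - 1) ≤ n - 1; omega)
        (by rw [hπ2, hsk, hEk]; show n - 1 < n; omega)
    have hzx : sLt σ (shiftW s (n - 1)) (shiftW s (n - 3)) :=
      (hs ⟨n - 1, h2⟩ ⟨n - 3, hn3'⟩).mp
        (by rw [hπ1, hπ3]; exact Fin.lt_def.mpr (show (0 : ℕ) < 1 by omega))
    rw [DaggerAux.shiftW_cons s (n - 1), DaggerAux.shiftW_cons s (n - 3),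
      show n - 1 + 1 = n by omega, show n - 3 + 1 = n - 2 by omega,
      show s (n - 1) = s (n - 3) from Fin.ext (by omega), DaggerAux.sLt_cons_cons,
      if_neg (by rw [show s (n - 3) = ⟨0, hk0⟩ from Fin.ext hsB, hσ0]; simp)] at hzx
    have hy2 : shiftW (shiftW s (n - 2)) 2 = shiftW s n :=
      funext fun m => congrArg s (by omega)
    refine DaggerAux.alt_up hk0 hk1 hσ0 hσ1 (shiftW s (n - 2)) ?_ ?_ (by rw [hy2]; exact hzx)
    · show s (0 + (n - 2)) = _; rw [Nat.zero_add]; exact Fin.ext hsC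
    · show s (1 + (n - 2)) = _; rw [show 1 + (n - 2) = n - 1 by omega]; exact Fin.ext hsA
  · -- no bad b
    intro b hbad
    obtain ⟨hb1, hbn, hpat, hlet⟩ := hbad
    have hper : ∀ i, 1 ≤ i → i ≤ b → s (n - 1 - b - i) = s (n - 1 - i) := by
      intro i hi1 hib
      have hq := (hlet i hi1 hib ((s (n - 1 - b - i) : ℕ)) (s (n - 1 - b - i)).isLt).mp
        ⟨block1 ⟨n - 1 - b - i, by omega⟩, block2 ⟨n - 1 - b - i, by omega⟩⟩
      have h2' : (s (n - 1 - i) : ℕ) = (s (n - 1 - b - i) : ℕ) :=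
        blockinv ⟨n - 1 - i, by omega⟩ ((s (n - 1 - b - i) : ℕ)) hq.1 hq.2
      exact Fin.ext h2'.symm
    have f1 : ∀ i < b, shiftW s (n - 1 - 2 * b) i = shiftW s (n - 1 - b) i := by
      intro i hi
      show s (i + (n - 1 - 2 * b)) = s (i + (n - 1 - b))
      rw [show i + (n - 1 - 2 * b) = n - 1 - b - (b - i) by omega,
        show i + (n - 1 - b) = n - 1 - (b - i) by omega]
      exact hper (b - i) (by omega) (by omega)
    have f2 : ∀ i, shiftW s (n - 1 - 2 * b) (i + b) = shiftW s (n - 1 - b) i := fun i =>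
      congrArg s (by omega)
    have f3 : ∀ i, shiftW s (n - 1 - b) (i + b) = shiftW s (n - 1) i := fun i =>
      congrArg s (by omega)
    have huv : shiftW s (n - 1) ≠ shiftW s (n - 1 - b) :=
      hdistinct ⟨n - 1, by omega⟩ ⟨n - 1 - b, by omega⟩ (Fin.ne_of_val_ne (by show n - 1 ≠ n - 1 - b; omega))
    have hsand := DaggerAux.sandwich (σ := σ) hb1 f1 f2 f3 huv
    rcases hpat with ⟨ha, hb'⟩ | ⟨ha, hb'⟩
    · have hwu : sLt σ (shiftW s (n - 1 - 2 * b)) (shiftW s (n - 1)) :=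
        (hs ⟨n - 1 - 2 * b, by omega⟩ ⟨n - 1, by omega⟩).mp (Fin.lt_def.mpr ha)
      have huv' : sLt σ (shiftW s (n - 1)) (shiftW s (n - 1 - b)) :=
        (hs ⟨n - 1, by omega⟩ ⟨n - 1 - b, by omega⟩).mp (Fin.lt_def.mpr hb')
      exact DaggerAux.sLt_asymm (hsand.1.mp huv') hwu
    · have hvu : sLt σ (shiftW s (n - 1 - b)) (shiftW s (n - 1)) :=
        (hs ⟨n - 1 - b, by omega⟩ ⟨n - 1, by omega⟩).mp (Fin.lt_def.mpr ha)
      have huw : sLt σ (shiftW s (n - 1)) (shiftW s (n - 1 - 2 * b)) :=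
        (hs ⟨n - 1, by omega⟩ ⟨n - 1 - 2 * b, by omega⟩).mp (Fin.lt_def.mpr hb')
      exact DaggerAux.sLt_asymm huw (hsand.2.mp hvu)
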